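/- Let p and q be distinct odd primes with q > p. In the graph BS(Γ(Z_{pq})), for any two distinct vertices a, a' in A and any vertex x with x ≠ a and x ≠ a', if d(a, x) ≠ 1 and d(a', x) ≠ 1, then d(a, x) = d(a', x), where d denotes the graph distance in BS(Γ(Z_{pq})). -/

import Mathlib

open SimpleGraph

/-- Vertices of the zero divisor graph of `ZMod n`: nonzero zero divisors. -/
def ZDVertex (n : ℕ) : Type :=
  {x : ZMod n // x ≠ 0 ∧ ∃ y : ZMod n, y ≠ 0 ∧ x * y = 0}

/-- The zero divisor graph of `ZMod n`. -/
def zdGraph (n : ℕ) : SimpleGraph (ZDVertex n) where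
  Adj a b := a ≠ b ∧ a.1 * b.1 = 0
  symm := by
    constructor
    rintro a b ⟨hne, h⟩
    exact ⟨hne.symm, by rwa [mul_comm]⟩
  loopless := by
    constructor
    rintro a ⟨hne, -⟩
    exact hne rfl

/-- Vertex type of the barycentric subdivision: original vertices plus one
vertex for each edge. -/
def BSVertex {V : Type*} (G : SimpleGraph V) : Type _ := V ⊕ G.edgeSet

/-- The barycentric subdivision of a simple graph: each edge `uv` is replaced
by a path `u – w_{uv} – v` through the new vertex corresponding to the edge. -/
def BS {V : Type*} (G : SimpleGraph V) : SimpleGraph (BSVertex G) where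
  Adj x y :=
    (∃ (v : V) (e : G.edgeSet), x = Sum.inl v ∧ y = Sum.inr e ∧ v ∈ (e : Sym2 V)) ∨
    (∃ (v : V) (e : G.edgeSet), x = Sum.inr e ∧ y = Sum.inl v ∧ v ∈ (e : Sym2 V))
  symm := by
    constructor
    rintro x y (⟨v, e, rfl, rfl, h⟩ | ⟨v, e, rfl, rfl, h⟩)
    · exact Or.inr ⟨v, e, rfl, rfl, h⟩
    · exact Or.inl ⟨v, e, rfl, rfl, h⟩
  loopless := by
    constructor
    rintro x (⟨v, e, rfl, h, -⟩ | ⟨v, e, rfl, h, -⟩) <;> simp at h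

/-- `W` is a resolving set for `G`. -/
def IsResolving {V : Type*} (G : SimpleGraph V) (W : Set V) : Prop :=
  ∀ x y : V, x ≠ y → ∃ w ∈ W, G.dist x w ≠ G.dist y w

/-- The metric dimension of `G`: minimum cardinality of a resolving set. -/
noncomputable def metricDim {V : Type*} (G : SimpleGraph V) : ℕ :=
  sInf {k : ℕ | ∃ W : Set V, IsResolving G W ∧ W.ncard = k}

/-- `W` is a metric basis of `G`: a resolving set of minimum cardinality. -/
def IsMetricBasis {V : Type*} (G : SimpleGraph V) (W : Set V) : Prop :=
  IsResolving G W ∧ W.ncard = metricDim G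

/-- `W` is a fault-tolerant resolving set for `G`. -/
def IsFTResolving {V : Type*} (G : SimpleGraph V) (W : Set V) : Prop :=
  IsResolving G W ∧ ∀ w ∈ W, IsResolving G (W \ {w})

/-- The fault-tolerant metric dimension of `G`. -/
noncomputable def ftMetricDim {V : Type*} (G : SimpleGraph V) : ℕ :=
  sInf {k : ℕ | ∃ W : Set V, IsFTResolving G W ∧ W.ncard = k}

/-- The set `U` of original vertices of `Γ(Z_{pq})`, viewed inside the
barycentric subdivision, that are nonzero multiples of `q` in `Z_{pq}`. -/
def USet (p q : ℕ) : Set (BSVertex (zdGraph (p * q))) :=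
  {x | ∃ v : ZDVertex (p * q), x = Sum.inl v ∧
      ∃ k : ZMod (p * q), v.1 = (q : ZMod (p * q)) * k}

/-- The set `A` of original vertices of `Γ(Z_{pq})`, viewed inside the
barycentric subdivision, that are nonzero multiples of `p` in `Z_{pq}`. -/
def ASet (p q : ℕ) : Set (BSVertex (zdGraph (p * q))) :=
  {x | ∃ v : ZDVertex (p * q), x = Sum.inl v ∧
      ∃ k : ZMod (p * q), v.1 = (p : ZMod (p * q)) * k}
section Aux

open SimpleGraph

variable {V : Type*} {G : SimpleGraph V}

lemma bs_adj_inl_inr (v : V) (e : G.edgeSet) (h : v ∈ (e : Sym2 V)) :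
    (BS G).Adj (Sum.inl v) (Sum.inr e) := Or.inl ⟨v, e, rfl, rfl, h⟩

lemma bs_not_adj_inl_inl (u v : V) : ¬ (BS G).Adj (Sum.inl u) (Sum.inl v) := by
  rintro (⟨_, _, -, h, -⟩ | ⟨_, _, h, -, -⟩) <;> simp [BSVertex] at h

lemma bs_adj_inl_elim {v : V} {y : BSVertex G} (h : (BS G).Adj (Sum.inl v) y) :
    ∃ e : G.edgeSet, y = Sum.inr e ∧ v ∈ (e : Sym2 V) := by
  rcases h with ⟨v', e, hv, hy, hm⟩ | ⟨v', e, hv, hy, hm⟩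
  · cases Sum.inl_injective hv; exact ⟨e, hy, hm⟩
  · simp [BSVertex] at hv

lemma bs_adj_isLeft {x y : BSVertex G} (h : (BS G).Adj x y) :
    x.isLeft = !y.isLeft := by
  rcases h with ⟨v, e, rfl, rfl, -⟩ | ⟨v, e, rfl, rfl, -⟩ <;> rfl

lemma bs_walk_even {x y : BSVertex G} (w : (BS G).Walk x y) :
    Even w.length ↔ (x.isLeft = y.isLeft) := by
  induction w with
  | nil => simp
  | @cons x b y h w ih =>
    rw [SimpleGraph.Walk.length_cons, Nat.even_add_one, ih, bs_adj_isLeft h]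
    cases hb : b.isLeft <;> cases hy : y.isLeft <;> simp

lemma exists_mid_of_dist_two {W : Type*} {H : SimpleGraph W} {x y : W}
    (h : H.dist x y = 2) : ∃ b, H.Adj x b ∧ H.Adj b y := by
  have hr : H.Reachable x y :=
    (SimpleGraph.dist_ne_zero_iff_ne_and_reachable.mp (by omega)).2
  obtain ⟨w, hw⟩ := hr.exists_walk_length_eq_dist
  rw [h] at hw
  cases w with
  | nil => simp at hw
  | cons h1 w' =>
    cases w' with
    | nil => simp at hw
    | cons h2 w'' =>
      cases w'' with
      | nil => exact ⟨_, h1, h2⟩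
      | cons h3 w''' => simp [SimpleGraph.Walk.length_cons] at hw

end Aux
section NT

lemma eq_mul_of_dvd_val {n m : ℕ} [NeZero n] {x : ZMod n} (h : m ∣ x.val) :
    ∃ k : ZMod n, x = (m : ZMod n) * k := by
  obtain ⟨c, hc⟩ := h
  exact ⟨(c : ZMod n), by rw [← ZMod.natCast_zmod_val x, hc]; push_cast; ring⟩

lemma dvd_val_of_eq_mul {n m : ℕ} [NeZero n] (hm : m ∣ n) {x k : ZMod n}
    (h : x = (m : ZMod n) * k) : m ∣ x.val := by
  have hx : x = ((m * k.val : ℕ) : ZMod n) := by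
    push_cast [ZMod.natCast_zmod_val]; exact h
  rw [hx, ZMod.val_natCast]
  exact (Nat.dvd_mod_iff hm).2 ⟨k.val, rfl⟩

variable {p q : ℕ}

lemma neZero_pq (hp : p.Prime) (hq : q.Prime) : NeZero (p * q) :=
  ⟨Nat.mul_ne_zero hp.pos.ne' hq.pos.ne'⟩

lemma zero_of_both (hp : p.Prime) (hq : q.Prime) (hne : p ≠ q) {x : ZMod (p * q)}
    (h1 : ∃ k, x = (p : ZMod (p * q)) * k) (h2 : ∃ k, x = (q : ZMod (p * q)) * k) :
    x = 0 := by
  haveI := neZero_pq hp hq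
  obtain ⟨k, hk⟩ := h1
  obtain ⟨l, hl⟩ := h2
  have hpv : p ∣ x.val := dvd_val_of_eq_mul ⟨q, rfl⟩ hk
  have hqv : q ∣ x.val := dvd_val_of_eq_mul ⟨p, mul_comm p q⟩ hl
  have hd : p * q ∣ x.val :=
    ((Nat.coprime_primes hp hq).mpr hne).mul_dvd_of_dvd_of_dvd hpv hqv
  rw [← ZMod.val_eq_zero]
  exact Nat.eq_zero_of_dvd_of_lt hd (ZMod.val_lt x)

lemma prod_val_dvd (hp : p.Prime) (hq : q.Prime) {x y : ZMod (p * q)}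
    (hxy : x * y = 0) : p * q ∣ x.val * y.val := by
  haveI := neZero_pq hp hq
  rw [← ZMod.natCast_eq_zero_iff]
  push_cast [ZMod.natCast_zmod_val]
  exact hxy

lemma zd_cases (hp : p.Prime) (hq : q.Prime) (hne : p ≠ q) (v : ZDVertex (p * q)) :
    (∃ k, v.1 = (p : ZMod (p * q)) * k) ∨ (∃ k, v.1 = (q : ZMod (p * q)) * k) := by
  haveI := neZero_pq hp hq
  obtain ⟨x, hx0, y, hy0, hxy⟩ := v
  by_contra hc
  push_neg at hc
  have hpv : ¬ p ∣ x.val := fun h => by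
    obtain ⟨k, hk⟩ := eq_mul_of_dvd_val (n := p * q) h
    exact hc.1 k hk
  have hqv : ¬ q ∣ x.val := fun h => by
    obtain ⟨k, hk⟩ := eq_mul_of_dvd_val (n := p * q) h
    exact hc.2 k hk
  have hco : Nat.Coprime (p * q) x.val :=
    Nat.Coprime.mul ((hp.coprime_iff_not_dvd).2 hpv) ((hq.coprime_iff_not_dvd).2 hqv)
  have hd : p * q ∣ y.val := hco.dvd_of_dvd_mul_left (prod_val_dvd hp hq hxy)
  exact hy0 (by rw [← ZMod.val_eq_zero]; exact Nat.eq_zero_of_dvd_of_lt hd (ZMod.val_lt y))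

lemma cast_q_ne_zero (hp : p.Prime) (hq : q.Prime) : (q : ZMod (p * q)) ≠ 0 := by
  haveI := neZero_pq hp hq
  rw [Ne, ZMod.natCast_eq_zero_iff]
  intro h
  have := Nat.le_of_dvd hq.pos h
  nlinarith [hp.two_le, hq.pos]

lemma cast_p_ne_zero (hp : p.Prime) (hq : q.Prime) : (p : ZMod (p * q)) ≠ 0 := by
  haveI := neZero_pq hp hq
  rw [Ne, ZMod.natCast_eq_zero_iff]
  intro h
  have := Nat.le_of_dvd hp.pos h
  nlinarith [hq.two_le, hp.pos]

/-- The canonical `U`-side vertex `q` of the zero divisor graph. -/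
def uVert (hp : p.Prime) (hq : q.Prime) : ZDVertex (p * q) :=
  ⟨(q : ZMod (p * q)), cast_q_ne_zero hp hq,
    (p : ZMod (p * q)), cast_p_ne_zero hp hq, by
      rw [← Nat.cast_mul, mul_comm q p, ZMod.natCast_self]⟩

end NT
section GD

open SimpleGraph

variable {p q : ℕ}

lemma bs_adj_inr_inl {V : Type*} {G : SimpleGraph V} (v : V) (e : G.edgeSet)
    (h : v ∈ (e : Sym2 V)) : (BS G).Adj (Sum.inr e) (Sum.inl v) :=
  Or.inr ⟨v, e, rfl, rfl, h⟩

lemma ne_of_A_U (hp : p.Prime) (hq : q.Prime) (hne : p ≠ q) {a u : ZDVertex (p * q)}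
    (ha : ∃ k, a.1 = (p : ZMod (p * q)) * k) (hu : ∃ k, u.1 = (q : ZMod (p * q)) * k) :
    a ≠ u := by
  intro h
  subst h
  exact a.2.1 (zero_of_both hp hq hne ha hu)

lemma adj_A_U (hp : p.Prime) (hq : q.Prime) (hne : p ≠ q) {a u : ZDVertex (p * q)}
    (ha : ∃ k, a.1 = (p : ZMod (p * q)) * k) (hu : ∃ k, u.1 = (q : ZMod (p * q)) * k) :
    (zdGraph (p * q)).Adj a u := by
  refine ⟨ne_of_A_U hp hq hne ha hu, ?_⟩
  obtain ⟨k, hk⟩ := ha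
  obtain ⟨l, hl⟩ := hu
  rw [hk, hl]
  calc (p : ZMod (p * q)) * k * ((q : ZMod (p * q)) * l)
      = ((p * q : ℕ) : ZMod (p * q)) * (k * l) := by push_cast; ring
    _ = 0 := by rw [ZMod.natCast_self, zero_mul]

lemma not_adj_A_A (hp : p.Prime) (hq : q.Prime) (hne : p ≠ q) {a b : ZDVertex (p * q)}
    (ha : ∃ k, a.1 = (p : ZMod (p * q)) * k) (hb : ∃ k, b.1 = (p : ZMod (p * q)) * k) :
    ¬ (zdGraph (p * q)).Adj a b := by
  haveI := neZero_pq hp hq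
  rintro ⟨-, h0⟩
  have hd : p * q ∣ a.1.val * b.1.val := prod_val_dvd hp hq h0
  have hqd : q ∣ a.1.val * b.1.val := dvd_trans (dvd_mul_left q p) hd
  rcases (Nat.Prime.dvd_mul hq).mp hqd with hqa | hqb
  · exact a.2.1 (zero_of_both hp hq hne ha (eq_mul_of_dvd_val hqa))
  · exact b.2.1 (zero_of_both hp hq hne hb (eq_mul_of_dvd_val hqb))

lemma dist_A_U (hp : p.Prime) (hq : q.Prime) (hne : p ≠ q) {va vu : ZDVertex (p * q)}
    (ha : ∃ k, va.1 = (p : ZMod (p * q)) * k) (hu : ∃ k, vu.1 = (q : ZMod (p * q)) * k) :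
    (BS (zdGraph (p * q))).dist (Sum.inl va) (Sum.inl vu) = 2 := by
  have hadj := adj_A_U hp hq hne ha hu
  let e : (zdGraph (p * q)).edgeSet := ⟨s(va, vu), hadj⟩
  let w : (BS (zdGraph (p * q))).Walk (Sum.inl va) (Sum.inl vu) :=
    Walk.cons (bs_adj_inl_inr va e (Sym2.mem_mk_left _ _))
      (Walk.cons (bs_adj_inr_inl vu e (Sym2.mem_mk_right _ _)) Walk.nil)
  have hle : (BS (zdGraph (p * q))).dist (Sum.inl va) (Sum.inl vu) ≤ 2 := by
    have hwl : w.length = 2 := rfl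
    have := SimpleGraph.dist_le w
    omega
  have hne0 : (BS (zdGraph (p * q))).dist (Sum.inl va) (Sum.inl vu) ≠ 0 := by
    have : (Sum.inl va : BSVertex (zdGraph (p * q))) ≠ Sum.inl vu :=
      fun h => ne_of_A_U hp hq hne ha hu (Sum.inl_injective h)
    exact (w.reachable.pos_dist_of_ne this).ne'
  have hne1 : (BS (zdGraph (p * q))).dist (Sum.inl va) (Sum.inl vu) ≠ 1 := by
    refine mt SimpleGraph.dist_eq_one_iff_adj.mp ?_
    exact bs_not_adj_inl_inl _ _
  omega

lemma dist_A_edge (hp : p.Prime) (hq : q.Prime) (hne : p ≠ q) {va : ZDVertex (p * q)}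
    (ha : ∃ k, va.1 = (p : ZMod (p * q)) * k) (e : (zdGraph (p * q)).edgeSet)
    (hnm : va ∉ (e : Sym2 (ZDVertex (p * q)))) :
    (BS (zdGraph (p * q))).dist (Sum.inl va) (Sum.inr e) = 3 := by
  obtain ⟨u, hum, hu⟩ : ∃ u : ZDVertex (p * q), u ∈ (e : Sym2 (ZDVertex (p * q))) ∧
      ∃ k, u.1 = (q : ZMod (p * q)) * k := by
    obtain ⟨s, hs⟩ := e
    induction s using Sym2.ind with
    | _ α β =>
      have hadj : (zdGraph (p * q)).Adj α β := (SimpleGraph.mem_edgeSet _).mp hs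
      rcases zd_cases hp hq hne α with hα | hα
      · rcases zd_cases hp hq hne β with hβ | hβ
        · exact absurd hadj (not_adj_A_A hp hq hne hα hβ)
        · exact ⟨β, Sym2.mem_mk_right _ _, hβ⟩
      · exact ⟨α, Sym2.mem_mk_left _ _, hα⟩
  have hadj := adj_A_U hp hq hne ha hu
  let e1 : (zdGraph (p * q)).edgeSet := ⟨s(va, u), hadj⟩
  let w : (BS (zdGraph (p * q))).Walk (Sum.inl va) (Sum.inr e) :=
    Walk.cons (bs_adj_inl_inr va e1 (Sym2.mem_mk_left _ _))
      (Walk.cons (bs_adj_inr_inl u e1 (Sym2.mem_mk_right _ _))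
        (Walk.cons (bs_adj_inl_inr u e hum) Walk.nil))
  have hle : (BS (zdGraph (p * q))).dist (Sum.inl va) (Sum.inr e) ≤ 3 := by
    have hwl : w.length = 3 := rfl
    have := SimpleGraph.dist_le w
    omega
  have hne0 : (BS (zdGraph (p * q))).dist (Sum.inl va) (Sum.inr e) ≠ 0 := by
    have hne' : (Sum.inl va : BSVertex (zdGraph (p * q))) ≠ Sum.inr e := by simp
    exact (w.reachable.pos_dist_of_ne hne').ne'
  have hne1 : (BS (zdGraph (p * q))).dist (Sum.inl va) (Sum.inr e) ≠ 1 := by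
    refine mt SimpleGraph.dist_eq_one_iff_adj.mp ?_
    intro h
    obtain ⟨e', he', hm⟩ := bs_adj_inl_elim h
    cases Sum.inr_injective he'
    exact hnm hm
  have hodd : (BS (zdGraph (p * q))).dist (Sum.inl va) (Sum.inr e) % 2 = 1 := by
    obtain ⟨w', hw'⟩ := w.reachable.exists_walk_length_eq_dist
    have := bs_walk_even w'
    rw [hw'] at this
    have hodd' : ¬ Even ((BS (zdGraph (p * q))).dist (Sum.inl va) (Sum.inr e)) := by
      simpa using this
    rw [Nat.even_iff] at hodd'
    omega
  omega

lemma dist_A_A (hp : p.Prime) (hq : q.Prime) (hne : p ≠ q) {va vb : ZDVertex (p * q)}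
    (ha : ∃ k, va.1 = (p : ZMod (p * q)) * k) (hb : ∃ k, vb.1 = (p : ZMod (p * q)) * k)
    (hab : va ≠ vb) :
    (BS (zdGraph (p * q))).dist (Sum.inl va) (Sum.inl vb) = 4 := by
  have hu : ∃ k, (uVert hp hq).1 = (q : ZMod (p * q)) * k := ⟨1, (mul_one _).symm⟩
  let e1 : (zdGraph (p * q)).edgeSet := ⟨s(va, uVert hp hq), adj_A_U hp hq hne ha hu⟩
  let e2 : (zdGraph (p * q)).edgeSet := ⟨s(vb, uVert hp hq), adj_A_U hp hq hne hb hu⟩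
  let w : (BS (zdGraph (p * q))).Walk (Sum.inl va) (Sum.inl vb) :=
    Walk.cons (bs_adj_inl_inr va e1 (Sym2.mem_mk_left _ _))
      (Walk.cons (bs_adj_inr_inl (uVert hp hq) e1 (Sym2.mem_mk_right _ _))
        (Walk.cons (bs_adj_inl_inr (uVert hp hq) e2 (Sym2.mem_mk_right _ _))
          (Walk.cons (bs_adj_inr_inl vb e2 (Sym2.mem_mk_left _ _)) Walk.nil)))
  have hle : (BS (zdGraph (p * q))).dist (Sum.inl va) (Sum.inl vb) ≤ 4 := by
    have hwl : w.length = 4 := rfl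
    have := SimpleGraph.dist_le w
    omega
  have hne0 : (BS (zdGraph (p * q))).dist (Sum.inl va) (Sum.inl vb) ≠ 0 := by
    have hne' : (Sum.inl va : BSVertex (zdGraph (p * q))) ≠ Sum.inl vb :=
      fun h => hab (Sum.inl_injective h)
    exact (w.reachable.pos_dist_of_ne hne').ne'
  have hne2 : (BS (zdGraph (p * q))).dist (Sum.inl va) (Sum.inl vb) ≠ 2 := by
    intro h
    obtain ⟨b, hxb, hby⟩ := exists_mid_of_dist_two h
    obtain ⟨ec, rfl, hma⟩ := bs_adj_inl_elim hxb
    obtain ⟨ec', hec', hmb⟩ := bs_adj_inl_elim hby.symm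
    cases Sum.inr_injective hec'
    have heq : (ec : Sym2 (ZDVertex (p * q))) = s(va, vb) :=
      ((Sym2.mem_and_mem_iff hab).mp ⟨hma, hmb⟩)
    have hadj : (zdGraph (p * q)).Adj va vb := by
      have := ec.2
      rw [heq] at this
      exact (SimpleGraph.mem_edgeSet _).mp this
    exact not_adj_A_A hp hq hne ha hb hadj
  have heven : (BS (zdGraph (p * q))).dist (Sum.inl va) (Sum.inl vb) % 2 = 0 := by
    obtain ⟨w', hw'⟩ := w.reachable.exists_walk_length_eq_dist
    have := bs_walk_even w'
    rw [hw'] at this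
    have heven' : Even ((BS (zdGraph (p * q))).dist (Sum.inl va) (Sum.inl vb)) := by
      simpa using this
    rw [Nat.even_iff] at heven'
    omega
  omega

end GD
theorem dist_eq_of_ne_one_ASet (p q : ℕ) (hp : p.Prime) (hq : q.Prime)
    (hpodd : Odd p) (hqodd : Odd q) (hne : p ≠ q) (hpq : q > p)
    (a a' x : BSVertex (zdGraph (p * q))) (ha : a ∈ ASet p q) (ha' : a' ∈ ASet p q)
    (haa' : a ≠ a') (hxa : x ≠ a) (hxa' : x ≠ a')
    (h1 : (BS (zdGraph (p * q))).dist a x ≠ 1)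
    (h2 : (BS (zdGraph (p * q))).dist a' x ≠ 1) :
    (BS (zdGraph (p * q))).dist a x = (BS (zdGraph (p * q))).dist a' x := by
  obtain ⟨va, rfl, ka, hka⟩ := ha
  obtain ⟨vb, rfl, kb, hkb⟩ := ha'
  have hA : ∃ k, va.1 = (p : ZMod (p * q)) * k := ⟨ka, hka⟩
  have hB : ∃ k, vb.1 = (p : ZMod (p * q)) * k := ⟨kb, hkb⟩
  cases x with
  | inl vx =>
    rcases zd_cases hp hq hne vx with hx | hx
    · rw [dist_A_A hp hq hne hA hx (fun h => hxa (by rw [h])),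
        dist_A_A hp hq hne hB hx (fun h => hxa' (by rw [h]))]
    · rw [dist_A_U hp hq hne hA hx, dist_A_U hp hq hne hB hx]
  | inr e =>
    have hma : va ∉ (e : Sym2 (ZDVertex (p * q))) := fun hm =>
      h1 (SimpleGraph.dist_eq_one_iff_adj.mpr (bs_adj_inl_inr va e hm))
    have hmb : vb ∉ (e : Sym2 (ZDVertex (p * q))) := fun hm =>
      h2 (SimpleGraph.dist_eq_one_iff_adj.mpr (bs_adj_inl_inr vb e hm))
    rw [dist_A_edge hp hq hne hA e hma, dist_A_edge hp hq hne hB e hmb]
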